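/- Let f, g ∈ G be cofinal bumps with disjoint supports. Then the following are equivalent: (i) every h ∈ G with h ≠ id has support meeting support(f) ∪ support(g); (ii) there exists a real number a such that one of f, g has support {q ∈ ℚ : q < a} and the other has support {q ∈ ℚ : a < q}. -/

import Mathlib

open FirstOrder

/-- `G` is the group of all order-automorphisms of `(ℚ, <)` under composition. -/
abbrev G : Type := ℚ ≃o ℚ

/-- The support of `f ∈ G`: the set of points moved by `f`. -/
def support (f : G) : Set ℚ := {a : ℚ | f a ≠ a}

/-- The orbital relation of `f`: `a ~_f b` iff `f^m a ≤ b ≤ f^n a` for some integers `m, n`. -/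
def orbRel (f : G) (a b : ℚ) : Prop := ∃ m n : ℤ, (f ^ m) a ≤ b ∧ b ≤ (f ^ n) a

/-- An orbital of `f` is an equivalence class of the orbital relation of `f`. -/
def IsOrbital (f : G) (X : Set ℚ) : Prop := ∃ a : ℚ, X = {b : ℚ | orbRel f a b}

/-- An orbital is nontrivial if it contains a point moved by `f`. -/
def IsNontrivialOrbital (f : G) (X : Set ℚ) : Prop :=
  IsOrbital f X ∧ ∃ a ∈ X, f a ≠ a

/-- A bump is a non-identity element of `G` with exactly one nontrivial orbital. -/
def IsBump (f : G) : Prop := f ≠ 1 ∧ ∃! X : Set ℚ, IsNontrivialOrbital f X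

/-- `g` is a restriction of `f`: the support of `g` is contained in that of `f`, and
`g` agrees with `f` on the support of `g`. -/
def IsRestriction (g f : G) : Prop :=
  support g ⊆ support f ∧ ∀ a ∈ support g, g a = f a

/-- A cofinal bump: a bump whose support is bounded above or below in `ℚ` but not both. -/
def IsCofinalBump (f : G) : Prop :=
  IsBump f ∧
    ((BddAbove (support f) ∧ ¬ BddBelow (support f)) ∨
     (BddBelow (support f) ∧ ¬ BddAbove (support f)))

lemma zpow_apply_add (f : G) (m n : ℤ) (x : ℚ) : (f ^ (m + n)) x = (f ^ m) ((f ^ n) x) := by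
  rw [zpow_add]; rfl

lemma apply_mem_support {f : G} {a : ℚ} (ha : a ∈ support f) : f a ∈ support f := by
  intro h
  exact ha (f.injective h)

lemma support_nonempty {f : G} (hf : f ≠ 1) : (support f).Nonempty := by
  by_contra h
  rw [Set.not_nonempty_iff_eq_empty, Set.eq_empty_iff_forall_notMem] at h
  apply hf
  ext x
  have := h x
  simp only [support, Set.mem_setOf_eq, not_not] at this
  exact this

lemma fixed_zpow {f : G} {a : ℚ} (ha : f a = a) (m : ℤ) : (f ^ m) a = a := by
  have hn : ∀ n : ℕ, (f ^ (n:ℤ)) a = a := by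
    intro n
    induction n with
    | zero => simp
    | succ k ih =>
      have h1 : ((k:ℤ) + 1) = 1 + (k:ℤ) := by ring
      rw [Nat.cast_succ, h1, zpow_apply_add, ih, zpow_one, ha]
  rcases le_or_gt 0 m with h | h
  · obtain ⟨n, rfl⟩ := Int.eq_ofNat_of_zero_le h
    exact hn n
  · obtain ⟨n, hm⟩ := Int.eq_ofNat_of_zero_le (neg_nonneg.mpr h.le)
    have h0 : (f ^ (-m)) a = a := by rw [hm]; exact hn n
    calc (f^m) a = (f^m) ((f^(-m)) a) := by rw [h0]
      _ = (f ^ (m + -m)) a := (zpow_apply_add f m (-m) a).symm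
      _ = a := by rw [add_neg_cancel, zpow_zero]; rfl

-- every point of a nontrivial orbital is moved
lemma moved_of_orbRel {f : G} {x y : ℚ} (hx : f x ≠ x) (h : orbRel f x y) : f y ≠ y := by
  intro hy
  obtain ⟨m, n, h1, h2⟩ := h
  have key : ∀ k : ℤ, m ≤ k → n ≤ k → (f ^ k) x = y := by
    intro k hkm hkn
    have e1 : (f ^ k) x ≤ y := by
      have := ((f ^ (k - m)).monotone h1 : (f ^ (k-m)) ((f^m) x) ≤ (f ^ (k-m)) y)
      rw [← zpow_apply_add, sub_add_cancel, fixed_zpow hy] at this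
      exact this
    have e2 : y ≤ (f ^ k) x := by
      have := ((f ^ (k - n)).monotone h2 : (f ^ (k-n)) y ≤ (f ^ (k-n)) ((f^n) x))
      rw [← zpow_apply_add, sub_add_cancel, fixed_zpow hy] at this
      exact this
    exact le_antisymm e1 e2
  set k := max m n with hk
  have hk1 : (f ^ k) x = y := key k (le_max_left _ _) (le_max_right _ _)
  have hk2 : (f ^ (k+1)) x = y :=
    key (k+1) ((le_max_left m n).trans (by omega)) ((le_max_right m n).trans (by omega))
  apply hx
  have h5 : (f ^ (-k)) ((f ^ (k+1)) x) = (f ^ (-k)) ((f ^ k) x) := by rw [hk1, hk2]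
  rw [← zpow_apply_add, ← zpow_apply_add] at h5
  have h3 : -k + (k+1) = 1 := by ring
  have h4 : -k + k = 0 := by ring
  rw [h3, h4, zpow_one, zpow_zero] at h5
  simpa using h5

lemma self_mem_orb (f : G) (x : ℚ) : orbRel f x x :=
  ⟨0, 0, by simp, by simp⟩

-- support of a bump is convex
lemma bump_support_convex {f : G} (hf : IsBump f) {x y z : ℚ}
    (hx : x ∈ support f) (hz : z ∈ support f) (h1 : x ≤ y) (h2 : y ≤ z) : y ∈ support f := by
  obtain ⟨-, X, hX, hXu⟩ := hf
  have hOx : IsNontrivialOrbital f {b | orbRel f x b} :=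
    ⟨⟨x, rfl⟩, x, self_mem_orb f x, hx⟩
  have hOz : IsNontrivialOrbital f {b | orbRel f z b} :=
    ⟨⟨z, rfl⟩, z, self_mem_orb f z, hz⟩
  have ex : {b | orbRel f x b} = X := hXu _ hOx
  have ez : {b | orbRel f z b} = X := hXu _ hOz
  have hzx : orbRel f x z := by
    have : z ∈ ({b | orbRel f z b} : Set ℚ) := self_mem_orb f z
    rw [ez, ← ex] at this
    exact this
  obtain ⟨m, n, hm1, hm2⟩ := hzx
  have : orbRel f x y := ⟨0, n, by simpa using h1, le_trans h2 hm2⟩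
  exact moved_of_orbRel hx this

lemma inv_apply_apply (f : G) (x : ℚ) : f⁻¹ (f x) = x := by
  have : (f⁻¹ * f) x = (1 : G) x := by rw [inv_mul_cancel]
  exact this

lemma apply_inv_apply (f : G) (x : ℚ) : f (f⁻¹ x) = x := by
  have : (f * f⁻¹) x = (1 : G) x := by rw [mul_inv_cancel]
  exact this

lemma exists_gt_support {f : G} {q : ℚ} (hq : q ∈ support f) : ∃ r ∈ support f, q < r := by
  rcases lt_or_gt_of_ne (hq : f q ≠ q) with h | h
  · -- f q < q, use f⁻¹ q
    have h1 : q < f⁻¹ q := by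
      have := f⁻¹.strictMono h
      rwa [inv_apply_apply] at this
    refine ⟨f⁻¹ q, ?_, h1⟩
    intro hc
    rw [apply_inv_apply] at hc
    exact absurd hc.symm (ne_of_gt h1)
  · exact ⟨f q, apply_mem_support hq, h⟩

lemma exists_lt_support {f : G} {q : ℚ} (hq : q ∈ support f) : ∃ r ∈ support f, r < q := by
  rcases lt_or_gt_of_ne (hq : f q ≠ q) with h | h
  · exact ⟨f q, apply_mem_support hq, h⟩
  · have h1 : f⁻¹ q < q := by
      have := f⁻¹.strictMono h
      rwa [inv_apply_apply] at this
    refine ⟨f⁻¹ q, ?_, h1⟩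
    intro hc
    rw [apply_inv_apply] at hc
    exact absurd hc.symm (ne_of_lt h1)

/-- Shape of the support of a cofinal bump. -/
lemma cofinal_bump_shape {f : G} (hf : IsCofinalBump f) :
    (∃ a : ℝ, support f = {q : ℚ | (q : ℝ) < a}) ∨
    (∃ a : ℝ, support f = {q : ℚ | a < (q : ℝ)}) := by
  have hne : (support f).Nonempty := support_nonempty hf.1.1
  rcases hf.2 with ⟨⟨b, hb⟩, hnb⟩ | ⟨⟨b, hb⟩, hnb⟩
  · -- bounded above, not below: left ray
    left
    set S : Set ℝ := (fun q : ℚ => (q:ℝ)) '' support f with hS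
    have hSne : S.Nonempty := hne.image _
    have hSbdd : BddAbove S := by
      refine ⟨(b:ℝ), ?_⟩
      rintro x ⟨q, hq, rfl⟩
      simpa using (Rat.cast_le (K:=ℝ)).mpr (hb hq)
    refine ⟨sSup S, ?_⟩
    ext q
    simp only [Set.mem_setOf_eq]
    constructor
    · intro hq
      obtain ⟨r, hr, hqr⟩ := exists_gt_support hq
      have : (r:ℝ) ≤ sSup S := le_csSup hSbdd ⟨r, hr, rfl⟩
      exact lt_of_lt_of_le (by exact_mod_cast hqr) this
    · intro hq
      obtain ⟨x, ⟨r, hr, rfl⟩, hqr⟩ := exists_lt_of_lt_csSup hSne hq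
      obtain ⟨p, hp, hpq⟩ := (not_bddBelow_iff.mp hnb) q
      have : q ≤ r := Rat.cast_le (K:=ℝ) |>.mp (by simpa using hqr.le)
      exact bump_support_convex hf.1 hp hr hpq.le this
  · right
    set S : Set ℝ := (fun q : ℚ => (q:ℝ)) '' support f with hS
    have hSne : S.Nonempty := hne.image _
    have hSbdd : BddBelow S := by
      refine ⟨(b:ℝ), ?_⟩
      rintro x ⟨q, hq, rfl⟩
      simpa using (Rat.cast_le (K:=ℝ)).mpr (hb hq)
    refine ⟨sInf S, ?_⟩
    ext q
    simp only [Set.mem_setOf_eq]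
    constructor
    · intro hq
      obtain ⟨r, hr, hqr⟩ := exists_lt_support hq
      have : sInf S ≤ (r:ℝ) := csInf_le hSbdd ⟨r, hr, rfl⟩
      exact lt_of_le_of_lt this (by exact_mod_cast hqr)
    · intro hq
      obtain ⟨x, ⟨r, hr, rfl⟩, hqr⟩ := exists_lt_of_csInf_lt hSne hq
      obtain ⟨p, hp, hpq⟩ := (not_bddAbove_iff.mp hnb) q
      have : r ≤ q := Rat.cast_le (K:=ℝ) |>.mp (by simpa using hqr.le)
      exact bump_support_convex hf.1 hr hp this hpq.le

/-- There is a nontrivial order automorphism supported inside any interval `Ioo p r`. -/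
lemma exists_small_bump (p r : ℚ) (hpr : p < r) :
    ∃ h : G, h ≠ 1 ∧ support h ⊆ Set.Ioo p r := by
  have hne : Nonempty ↥(Set.Ioo p r) := ⟨⟨(p+r)/2, by constructor <;> linarith⟩⟩
  obtain ⟨e⟩ : Nonempty (ℚ ≃o ↥(Set.Ioo p r)) := Order.iso_of_countable_dense _ _
  set φ : ℚ ≃o ℚ := OrderIso.addRight (1:ℚ) with hφ
  set u : ↥(Set.Ioo p r) ≃o ↥(Set.Ioo p r) := (e.symm.trans φ).trans e with hu
  have humoves : ∀ z : ↥(Set.Ioo p r), u z ≠ z := by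
    intro z hz
    have : e.symm (u z) = e.symm z := by rw [hz]
    simp only [hu, OrderIso.trans_apply, OrderIso.symm_apply_apply] at this
    have : φ (e.symm z) = e.symm z := this
    have h2 : e.symm z + 1 = e.symm z := this
    linarith
  set h0 : ℚ → ℚ := fun q => if hq : q ∈ Set.Ioo p r then (u ⟨q, hq⟩ : ℚ) else q with hh0
  have hmem : ∀ q (hq : q ∈ Set.Ioo p r), h0 q = (u ⟨q, hq⟩ : ℚ) := by
    intro q hq; exact dif_pos hq
  have hout : ∀ q, q ∉ Set.Ioo p r → h0 q = q := by
    intro q hq; exact dif_neg hq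
  have hmono : StrictMono h0 := by
    intro a b hab
    by_cases ha : a ∈ Set.Ioo p r <;> by_cases hb : b ∈ Set.Ioo p r
    · rw [hmem a ha, hmem b hb]
      exact_mod_cast u.strictMono (show (⟨a, ha⟩ : ↥(Set.Ioo p r)) < ⟨b, hb⟩ from hab)
    · -- a in, b out: b ≥ r
      have hbr : r ≤ b := by
        rcases lt_or_ge b r with h | h
        · exact absurd ⟨lt_trans ha.1 hab, h⟩ hb
        · exact h
      rw [hmem a ha, hout b hb]
      exact lt_of_lt_of_le (u ⟨a, ha⟩).2.2 hbr
    · have hap : a ≤ p := by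
        rcases lt_or_ge p a with h | h
        · exact absurd ⟨h, lt_trans hab hb.2⟩ ha
        · exact h
      rw [hout a ha, hmem b hb]
      exact lt_of_le_of_lt hap (u ⟨b, hb⟩).2.1
    · rw [hout a ha, hout b hb]; exact hab
  have hsurj : Function.Surjective h0 := by
    intro y
    by_cases hy : y ∈ Set.Ioo p r
    · refine ⟨(u.symm ⟨y, hy⟩ : ℚ), ?_⟩
      rw [hmem _ (u.symm ⟨y, hy⟩).2]
      simp
    · exact ⟨y, hout y hy⟩
  set h : G := StrictMono.orderIsoOfSurjective h0 hmono hsurj with hhh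
  have happ : ∀ q, h q = h0 q := fun q => rfl
  refine ⟨h, ?_, ?_⟩
  · intro hc
    set z : ↥(Set.Ioo p r) := ⟨(p+r)/2, by constructor <;> linarith⟩ with hz
    have : h0 ((p+r)/2) = (p+r)/2 := by
      have := congrArg (fun (k : G) => k ((p+r)/2)) hc
      simpa [happ] using this
    rw [hmem _ z.2] at this
    exact humoves z (Subtype.ext this)
  · intro q hq
    by_contra hq'
    exact hq ((happ q).trans (hout q hq'))

/-- For cofinal bumps `f, g` with disjoint supports: every non-identity element of `G` has
support meeting `support f ∪ support g` iff there is a real `a` such that one of `f, g` has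
support `{q | q < a}` and the other has support `{q | a < q}`. -/
theorem oppsupport_iff (f g : G) (hf : IsCofinalBump f) (hg : IsCofinalBump g)
    (hd : support f ∩ support g = ∅) :
    (∀ h : G, h ≠ 1 → (support h ∩ (support f ∪ support g)).Nonempty) ↔
      (∃ a : ℝ,
        (support f = {q : ℚ | (q : ℝ) < a} ∧ support g = {q : ℚ | a < (q : ℝ)}) ∨
        (support g = {q : ℚ | (q : ℝ) < a} ∧ support f = {q : ℚ | a < (q : ℝ)})) := by
  constructor
  · intro H
    have nodup_left : ∀ (u v : G), support u ∩ support v = ∅ →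
        ∀ α β : ℝ, support u = {q : ℚ | (q:ℝ) < α} → support v = {q : ℚ | (q:ℝ) < β} →
        u ≠ 1 → v ≠ 1 → False := by
      intro u v huv α β hu hv hu1 hv1
      obtain ⟨qu, hqu⟩ := support_nonempty hu1
      obtain ⟨qv, hqv⟩ := support_nonempty hv1
      rw [hu] at hqu; rw [hv] at hqv
      have hqu' : (qu:ℝ) < α := hqu
      have hqv' : (qv:ℝ) < β := hqv
      have h1 : min qu qv ∈ support u := by
        rw [hu]
        show ((min qu qv : ℚ):ℝ) < α
        exact lt_of_le_of_lt (by exact_mod_cast min_le_left qu qv) hqu'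
      have h2 : min qu qv ∈ support v := by
        rw [hv]
        show ((min qu qv : ℚ):ℝ) < β
        exact lt_of_le_of_lt (by exact_mod_cast min_le_right qu qv) hqv'
      have hmem : min qu qv ∈ support u ∩ support v := ⟨h1, h2⟩
      rw [huv] at hmem
      exact hmem
    have nodup_right : ∀ (u v : G), support u ∩ support v = ∅ →
        ∀ α β : ℝ, support u = {q : ℚ | α < (q:ℝ)} → support v = {q : ℚ | β < (q:ℝ)} →
        u ≠ 1 → v ≠ 1 → False := by
      intro u v huv α β hu hv hu1 hv1
      obtain ⟨qu, hqu⟩ := support_nonempty hu1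
      obtain ⟨qv, hqv⟩ := support_nonempty hv1
      rw [hu] at hqu; rw [hv] at hqv
      have hqu' : α < (qu:ℝ) := hqu
      have hqv' : β < (qv:ℝ) := hqv
      have h1 : max qu qv ∈ support u := by
        rw [hu]
        show α < ((max qu qv : ℚ):ℝ)
        exact lt_of_lt_of_le hqu' (by exact_mod_cast le_max_left qu qv)
      have h2 : max qu qv ∈ support v := by
        rw [hv]
        show β < ((max qu qv : ℚ):ℝ)
        exact lt_of_lt_of_le hqv' (by exact_mod_cast le_max_right qu qv)
      have hmem : max qu qv ∈ support u ∩ support v := ⟨h1, h2⟩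
      rw [huv] at hmem
      exact hmem
    have mixed : ∀ α β : ℝ, α ≤ β →
        (∀ q : ℚ, q ∈ support f ∪ support g → ((q:ℝ) < α ∨ β < (q:ℝ))) → α = β := by
      intro α β hab hcover
      by_contra hc
      have hαβ' : α < β := lt_of_le_of_ne hab hc
      obtain ⟨p, hp1, hp2⟩ := exists_rat_btwn hαβ'
      obtain ⟨r, hr1, hr2⟩ := exists_rat_btwn hp2
      have hpr : p < r := by exact_mod_cast hr1
      obtain ⟨h, hh1, hh2⟩ := exists_small_bump p r hpr
      obtain ⟨q, hqh, hqfg⟩ := H h hh1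
      have hq : q ∈ Set.Ioo p r := hh2 hqh
      have hq1 : (p:ℝ) < (q:ℝ) := by exact_mod_cast hq.1
      have hq2 : (q:ℝ) < (r:ℝ) := by exact_mod_cast hq.2
      rcases hcover q hqfg with h' | h'
      · exact absurd (lt_trans hp1 hq1) (not_lt.mpr h'.le)
      · exact absurd (lt_trans hq2 hr2) (not_lt.mpr h'.le)
    have sep : ∀ α β : ℝ, support f = {q : ℚ | (q:ℝ) < α} ∨ support g = {q : ℚ | (q:ℝ) < α} →
        support f = {q : ℚ | β < (q:ℝ)} ∨ support g = {q : ℚ | β < (q:ℝ)} →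
        α ≤ β := by
      intro α β hL hR
      by_contra hc
      push_neg at hc
      obtain ⟨q, hq1, hq2⟩ := exists_rat_btwn hc
      have hone : q ∈ support f ∨ q ∈ support g := by
        rcases hL with h1 | h1
        · exact Or.inl (by rw [h1]; exact hq2)
        · exact Or.inr (by rw [h1]; exact hq2)
      have hother : q ∈ support f ∨ q ∈ support g := by
        rcases hR with h1 | h1
        · exact Or.inl (by rw [h1]; exact hq1)
        · exact Or.inr (by rw [h1]; exact hq1)
      -- q is in both a left-ray support and a right-ray support; since the supports
      -- are disjoint and a set can't be both rays (they'd intersect), derive False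
      rcases hL with h1 | h1 <;> rcases hR with h2 | h2
      · -- support f both: {<α} = {>β} with β < α: q ∈ both is fine, but then
        -- q ∈ support f; pick q' < β rational with q' < α : q' ∈ {<α} = supp f = {>β} needs q' > β
        obtain ⟨q', hq'1, hq'2⟩ := exists_rat_btwn (show (β - 1 : ℝ) < min α β by
          simp only [lt_min_iff]; constructor <;> [linarith; linarith])
        have hmem1 : q' ∈ support f := by
          rw [h1]
          exact lt_of_lt_of_le hq'2 (min_le_left _ _)
        rw [h2] at hmem1
        have : β < (q':ℝ) := hmem1
        have : (q':ℝ) < β := lt_of_lt_of_le hq'2 (min_le_right _ _)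
        linarith
      · have hmem : q ∈ support f ∩ support g := ⟨by rw [h1]; exact hq2, by rw [h2]; exact hq1⟩
        rw [hd] at hmem
        exact hmem
      · have hmem : q ∈ support f ∩ support g := ⟨by rw [h2]; exact hq1, by rw [h1]; exact hq2⟩
        rw [hd] at hmem
        exact hmem
      · obtain ⟨q', hq'1, hq'2⟩ := exists_rat_btwn (show (β - 1 : ℝ) < min α β by
          simp only [lt_min_iff]; constructor <;> [linarith; linarith])
        have hmem1 : q' ∈ support g := by
          rw [h1]
          exact lt_of_lt_of_le hq'2 (min_le_left _ _)
        rw [h2] at hmem1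
        have : β < (q':ℝ) := hmem1
        have : (q':ℝ) < β := lt_of_lt_of_le hq'2 (min_le_right _ _)
        linarith
    rcases cofinal_bump_shape hf with ⟨α, hfs⟩ | ⟨α, hfs⟩ <;>
      rcases cofinal_bump_shape hg with ⟨β, hgs⟩ | ⟨β, hgs⟩
    · exact absurd (nodup_left f g hd α β hfs hgs hf.1.1 hg.1.1) not_false
    · have hle : α ≤ β := sep α β (Or.inl hfs) (Or.inr hgs)
      have heq : α = β := by
        apply mixed α β hle
        intro q hq
        rcases hq with hq | hq
        · rw [hfs] at hq; exact Or.inl hq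
        · rw [hgs] at hq; exact Or.inr hq
      exact ⟨α, Or.inl ⟨hfs, by rw [hgs, heq]⟩⟩
    · have hle : β ≤ α := sep β α (Or.inr hgs) (Or.inl hfs)
      have heq : β = α := by
        apply mixed β α hle
        intro q hq
        rcases hq with hq | hq
        · rw [hfs] at hq; exact Or.inr hq
        · rw [hgs] at hq; exact Or.inl hq
      exact ⟨β, Or.inr ⟨hgs, by rw [hfs, heq]⟩⟩
    · exact absurd (nodup_right f g hd α β hfs hgs hf.1.1 hg.1.1) not_false
  · rintro ⟨a, hcase⟩ h hne1
    obtain ⟨q, hq⟩ := support_nonempty hne1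
    have hq2 : h q ∈ support h := apply_mem_support hq
    have hx : ∃ x ∈ support h, (x:ℝ) ≠ a := by
      by_contra hc
      push_neg at hc
      have e1 := hc q hq
      have e2 := hc _ hq2
      exact hq (by exact_mod_cast e2.trans e1.symm)
    obtain ⟨x, hxh, hxa⟩ := hx
    rcases hcase with ⟨hf1, hg1⟩ | ⟨hg1, hf1⟩ <;>
      rcases lt_or_gt_of_ne hxa with h' | h'
    · exact ⟨x, hxh, Or.inl (by rw [hf1]; exact h')⟩
    · exact ⟨x, hxh, Or.inr (by rw [hg1]; exact h')⟩
    · exact ⟨x, hxh, Or.inr (by rw [hg1]; exact h')⟩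
    · exact ⟨x, hxh, Or.inl (by rw [hf1]; exact h')⟩
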